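/- If positive integers n_1 ≥ n_2 ≥ n_3 ≥ n_4 ≥ n_5 and nonnegative integer a satisfy F_{n_1} + F_{n_2} + F_{n_3} + F_{n_4} + F_{n_5} = 2^a with n_1 > 400, then |1 - 2^a·α^{-n_1}·√5| < 11.5/α^{n_1-n_2}, where α = (1+√5)/2. -/

import Mathlib

theorem lambda1_bound (n₁ n₂ n₃ n₄ n₅ a : ℕ)
    (h1 : 1 ≤ n₅) (h2 : n₅ ≤ n₄) (h3 : n₄ ≤ n₃) (h4 : n₃ ≤ n₂) (h5 : n₂ ≤ n₁)
    (h6 : 400 < n₁)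
    (heq : Nat.fib n₁ + Nat.fib n₂ + Nat.fib n₃ + Nat.fib n₄ + Nat.fib n₅ = 2 ^ a) :
    |1 - (2 : ℝ) ^ a * ((1 + Real.sqrt 5) / 2) ^ (-(n₁ : ℤ)) * Real.sqrt 5|
      < 11.5 / ((1 + Real.sqrt 5) / 2) ^ (n₁ - n₂) := by
  have h5pos : (0:ℝ) < Real.sqrt 5 := Real.sqrt_pos.mpr (by norm_num)
  set φ : ℝ := (1 + Real.sqrt 5) / 2 with hφdef
  set ψ : ℝ := (1 - Real.sqrt 5) / 2 with hψdef
  have hφg : Real.goldenRatio = φ := rfl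
  have hψg : Real.goldenConj = ψ := rfl
  have hgold : (1:ℝ) < φ := by rw [← hφg]; exact Real.one_lt_goldenRatio
  have hφ0 : (0:ℝ) < φ := lt_trans one_pos hgold
  have hψ1 : |ψ| < 1 := by
    rw [abs_lt, ← hψg]
    exact ⟨Real.neg_one_lt_goldenConj, Real.goldenConj_neg.trans one_pos⟩
  have hfib : ∀ n : ℕ, (Nat.fib n : ℝ) * Real.sqrt 5 = φ ^ n - ψ ^ n := by
    intro n
    rw [show (Nat.fib n : ℝ) = (φ ^ n - ψ ^ n) / Real.sqrt 5 from Real.coe_fib_eq n]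
    field_simp
  have hcast : ((Nat.fib n₁ : ℝ) + Nat.fib n₂ + Nat.fib n₃ + Nat.fib n₄ + Nat.fib n₅)
      = 2 ^ a := by exact_mod_cast congrArg (Nat.cast : ℕ → ℝ) heq
  have hz : ∀ m : ℕ, φ ^ m * φ ^ (-(n₁:ℤ)) = φ ^ ((m:ℤ) - n₁) := by
    intro m
    rw [← zpow_natCast φ m, ← zpow_add₀ (ne_of_gt hφ0)]
    ring_nf
  have hone : φ ^ n₁ * φ ^ (-(n₁:ℤ)) = 1 := by
    rw [hz n₁, sub_self, zpow_zero]
  have key : 1 - (2:ℝ) ^ a * φ ^ (-(n₁:ℤ)) * Real.sqrt 5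
      = -(φ ^ ((n₂:ℤ) - n₁) + φ ^ ((n₃:ℤ) - n₁) + φ ^ ((n₄:ℤ) - n₁) + φ ^ ((n₅:ℤ) - n₁))
        + (ψ ^ n₁ + ψ ^ n₂ + ψ ^ n₃ + ψ ^ n₄ + ψ ^ n₅) * φ ^ (-(n₁:ℤ)) := by
    have : (2:ℝ) ^ a * φ ^ (-(n₁:ℤ)) * Real.sqrt 5
        = (((Nat.fib n₁ : ℝ) + Nat.fib n₂ + Nat.fib n₃ + Nat.fib n₄ + Nat.fib n₅)
            * Real.sqrt 5) * φ ^ (-(n₁:ℤ)) := by rw [hcast]; ring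
    rw [this]
    have hexp : ((Nat.fib n₁ : ℝ) + Nat.fib n₂ + Nat.fib n₃ + Nat.fib n₄ + Nat.fib n₅)
        * Real.sqrt 5
        = (φ ^ n₁ + φ ^ n₂ + φ ^ n₃ + φ ^ n₄ + φ ^ n₅)
          - (ψ ^ n₁ + ψ ^ n₂ + ψ ^ n₃ + ψ ^ n₄ + ψ ^ n₅) := by
      linear_combination hfib n₁ + hfib n₂ + hfib n₃ + hfib n₄ + hfib n₅
    rw [hexp]
    have expand : (φ ^ n₁ + φ ^ n₂ + φ ^ n₃ + φ ^ n₄ + φ ^ n₅) * φ ^ (-(n₁:ℤ))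
        = 1 + φ ^ ((n₂:ℤ) - n₁) + φ ^ ((n₃:ℤ) - n₁) + φ ^ ((n₄:ℤ) - n₁) + φ ^ ((n₅:ℤ) - n₁) := by
      rw [add_mul, add_mul, add_mul, add_mul, hone, hz n₂, hz n₃, hz n₄, hz n₅]
    rw [sub_mul, expand]
    ring
  rw [key]
  set e : ℤ := (n₂:ℤ) - n₁ with hedef
  have hle : ∀ m : ℕ, m ≤ n₂ → φ ^ ((m:ℤ) - n₁) ≤ φ ^ e := fun m hm =>
    zpow_le_zpow_right₀ hgold.le (by omega)
  have hψb : ∀ m : ℕ, |ψ ^ m| ≤ 1 := fun m => by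
    rw [abs_pow]; exact pow_le_one₀ (abs_nonneg _) hψ1.le
  have hneg : φ ^ (-(n₁:ℤ)) ≤ φ ^ e :=
    zpow_le_zpow_right₀ hgold.le (by omega)
  have hpos : ∀ k : ℤ, (0:ℝ) < φ ^ k := fun k => zpow_pos hφ0 k
  have habs : |(-(φ ^ ((n₂:ℤ) - n₁) + φ ^ ((n₃:ℤ) - n₁) + φ ^ ((n₄:ℤ) - n₁) + φ ^ ((n₅:ℤ) - n₁))
        + (ψ ^ n₁ + ψ ^ n₂ + ψ ^ n₃ + ψ ^ n₄ + ψ ^ n₅) * φ ^ (-(n₁:ℤ)))|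
      ≤ 9 * φ ^ e := by
    have t1 : |(φ ^ ((n₂:ℤ) - n₁) + φ ^ ((n₃:ℤ) - n₁) + φ ^ ((n₄:ℤ) - n₁) + φ ^ ((n₅:ℤ) - n₁))|
        ≤ 4 * φ ^ e := by
      rw [abs_of_pos (by positivity)]
      have := hle n₂ le_rfl; have := hle n₃ h4; have := hle n₄ (h3.trans h4)
      have := hle n₅ (h2.trans (h3.trans h4))
      linarith
    have t2 : |(ψ ^ n₁ + ψ ^ n₂ + ψ ^ n₃ + ψ ^ n₄ + ψ ^ n₅) * φ ^ (-(n₁:ℤ))| ≤ 5 * φ ^ e := by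
      rw [abs_mul, abs_of_pos (hpos _)]
      have hsum : |ψ ^ n₁ + ψ ^ n₂ + ψ ^ n₃ + ψ ^ n₄ + ψ ^ n₅| ≤ 5 := by
        have b1 := abs_le.mp (hψb n₁); have b2 := abs_le.mp (hψb n₂)
        have b3 := abs_le.mp (hψb n₃); have b4 := abs_le.mp (hψb n₄)
        have b5 := abs_le.mp (hψb n₅)
        rw [abs_le]
        constructor <;> [linarith [b1.1,b2.1,b3.1,b4.1,b5.1]; linarith [b1.2,b2.2,b3.2,b4.2,b5.2]]
      calc |ψ ^ n₁ + ψ ^ n₂ + ψ ^ n₃ + ψ ^ n₄ + ψ ^ n₅| * φ ^ (-(n₁:ℤ))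
          ≤ 5 * φ ^ (-(n₁:ℤ)) := by
            exact mul_le_mul_of_nonneg_right hsum (hpos _).le
        _ ≤ 5 * φ ^ e := by linarith [hneg]
    calc _ ≤ |(-(φ ^ ((n₂:ℤ) - n₁) + φ ^ ((n₃:ℤ) - n₁) + φ ^ ((n₄:ℤ) - n₁) + φ ^ ((n₅:ℤ) - n₁)))|
          + |(ψ ^ n₁ + ψ ^ n₂ + ψ ^ n₃ + ψ ^ n₄ + ψ ^ n₅) * φ ^ (-(n₁:ℤ))| := abs_add_le _ _
      _ = |(φ ^ ((n₂:ℤ) - n₁) + φ ^ ((n₃:ℤ) - n₁) + φ ^ ((n₄:ℤ) - n₁) + φ ^ ((n₅:ℤ) - n₁))|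
          + |(ψ ^ n₁ + ψ ^ n₂ + ψ ^ n₃ + ψ ^ n₄ + ψ ^ n₅) * φ ^ (-(n₁:ℤ))| := by rw [abs_neg]
      _ ≤ 9 * φ ^ e := by linarith
  have hrhs : 11.5 / φ ^ (n₁ - n₂) = 11.5 * φ ^ e := by
    have : e = -((n₁ - n₂ : ℕ) : ℤ) := by rw [hedef]; omega
    rw [this, div_eq_mul_inv, ← zpow_natCast φ (n₁ - n₂), ← zpow_neg]
  rw [hrhs]
  calc _ ≤ 9 * φ ^ e := habs
    _ < 11.5 * φ ^ e := by nlinarith [hpos e]
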